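/- arXiv:2304.07096 — 3 statements merged into one kernel-verified Lean document; each statement's English description precedes it below -/
import Mathlib

section
/- The matrix Q is invertible and Q⁻¹ is a positive matrix in the entrywise sense: [Q⁻¹]_{ij} ≥ 0 for all i,j ∈ {0,…,n} (in fact [Q⁻¹]_{ij} = k₀ + min(i,j) > 0). -/
open Matrix

/-- The GMRF random-walk precision matrix `Q` of size `(n+1) × (n+1)`. -/
noncomputable def Qmat (n : ℕ) (k₀ : ℝ) : Matrix (Fin (n+1)) (Fin (n+1)) ℝ :=
  fun i j =>
    if i = j then
      if (i : ℕ) = 0 then 1 + 1 / k₀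
      else if (i : ℕ) = n then 1
      else 2
    else if (i : ℕ) + 1 = (j : ℕ) ∨ (j : ℕ) + 1 = (i : ℕ) then -1
    else 0

noncomputable def Rmat (n : ℕ) (k₀ : ℝ) : Matrix (Fin (n+1)) (Fin (n+1)) ℝ :=
  fun i j => k₀ + ((min (i : ℕ) (j : ℕ) : ℕ) : ℝ)

lemma sum_ite_coe {m : ℕ} (f : Fin m → ℝ) (c : ℕ) :
    ∑ l : Fin m, (if (l : ℕ) = c then f l else 0) =
      if h : c < m then f ⟨c, h⟩ else 0 := by
  split_ifs with h
  · rw [Finset.sum_eq_single (⟨c, h⟩ : Fin m)]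
    · simp
    · intro b _ hb
      rw [if_neg]
      simpa [Fin.ext_iff] using hb
    · simp
  · apply Finset.sum_eq_zero
    intro l _
    rw [if_neg]
    intro heq
    exact h (heq ▸ l.isLt)

lemma Qsplit (n : ℕ) (k₀ : ℝ) (i l : Fin (n+1)) :
    Qmat n k₀ i l =
      (if l = i then (if (i : ℕ) = 0 then 1 + 1 / k₀ else if (i : ℕ) = n then 1 else 2) else 0)
      + (if (l : ℕ) = (i : ℕ) + 1 then -1 else 0)
      + (if (l : ℕ) + 1 = (i : ℕ) then -1 else 0) := by
  unfold Qmat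
  by_cases h : i = l
  · subst h
    rw [if_pos rfl, if_pos rfl, if_neg (show ¬((i:ℕ) = (i:ℕ) + 1) by omega), if_neg (show ¬((i:ℕ) + 1 = (i:ℕ)) by omega)]; ring
  · rw [if_neg h]
    have h' : (i : ℕ) ≠ (l : ℕ) := fun hc => h (Fin.ext hc)
    split_ifs <;> simp_all <;> try omega

lemma mulQR (n : ℕ) (hn : 1 ≤ n) (k₀ : ℝ) (hk : 0 < k₀) :
    Qmat n k₀ * Rmat n k₀ = 1 := by
  ext i j
  rw [Matrix.mul_apply]
  have key : ∀ l : Fin (n+1), Qmat n k₀ i l * Rmat n k₀ l j =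
      (if l = i then (if (i : ℕ) = 0 then 1 + 1 / k₀ else if (i : ℕ) = n then 1 else 2) * Rmat n k₀ l j else 0)
      + (if (l : ℕ) = (i : ℕ) + 1 then -Rmat n k₀ l j else 0)
      + (if (l : ℕ) + 1 = (i : ℕ) then -Rmat n k₀ l j else 0) := by
    intro l
    rw [Qsplit]
    split_ifs <;> ring
  simp only [key]
  rw [Finset.sum_add_distrib, Finset.sum_add_distrib, Finset.sum_ite_eq' Finset.univ i,
    sum_ite_coe (fun l => -Rmat n k₀ l j) ((i : ℕ) + 1)]
  have third : ∑ l : Fin (n+1), (if (l : ℕ) + 1 = (i : ℕ) then -Rmat n k₀ l j else 0) =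
      if h : (i : ℕ) - 1 < n + 1 ∧ (i : ℕ) ≠ 0 then -Rmat n k₀ ⟨(i : ℕ) - 1, h.1⟩ j else 0 := by
    by_cases hi0 : (i : ℕ) = 0
    · rw [dif_neg (by omega)]
      apply Finset.sum_eq_zero
      intro l _
      rw [if_neg (by omega)]
    · have hcond : ∀ l : Fin (n+1), ((l : ℕ) + 1 = (i : ℕ)) = ((l : ℕ) = (i : ℕ) - 1) := by
        intro l; apply propext; omega
      simp only [hcond]
      rw [sum_ite_coe (fun l => -Rmat n k₀ l j) ((i : ℕ) - 1), dif_pos (by omega),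
        dif_pos ⟨by omega, hi0⟩]
  rw [third]
  simp only [Finset.mem_univ, if_pos, Matrix.one_apply, Fin.ext_iff, Rmat]
  by_cases hi0 : (i : ℕ) = 0
  · rw [dif_pos (show (i:ℕ)+1 < n+1 by omega), dif_neg (show ¬((i:ℕ) - 1 < n + 1 ∧ (i:ℕ) ≠ 0) by omega), if_pos hi0]
    by_cases hj0 : (j : ℕ) = 0
    · have e1 : (i:ℕ) ⊓ (j:ℕ) = 0 := by omega
      have e2 : ((i:ℕ)+1) ⊓ (j:ℕ) = 0 := by omega
      rw [e1, e2, if_pos (by omega)]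
      push_cast
      field_simp
      ring
    · have e1 : (i:ℕ) ⊓ (j:ℕ) = 0 := by omega
      have e2 : ((i:ℕ)+1) ⊓ (j:ℕ) = 1 := by omega
      rw [e1, e2, if_neg (by omega)]
      push_cast
      field_simp
      ring
  · obtain ⟨m, hm⟩ : ∃ m, (i:ℕ) = m + 1 := ⟨(i:ℕ)-1, by omega⟩
    rw [dif_pos (show (i:ℕ) - 1 < n + 1 ∧ (i:ℕ) ≠ 0 by omega), if_neg hi0]
    by_cases hin : (i : ℕ) = n
    · rw [dif_neg (show ¬((i:ℕ) + 1 < n + 1) by omega), if_pos hin]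
      by_cases hji : (j:ℕ) = (i:ℕ)
      · have e1 : (i:ℕ) ⊓ (j:ℕ) = m + 1 := by omega
        have e3 : ((i:ℕ)-1) ⊓ (j:ℕ) = m := by omega
        rw [e1, e3, if_pos (by omega)]
        push_cast
        ring
      · have hji' : (j:ℕ) < (i:ℕ) := by omega
        have e1 : (i:ℕ) ⊓ (j:ℕ) = (j:ℕ) := by omega
        have e3 : ((i:ℕ)-1) ⊓ (j:ℕ) = (j:ℕ) := by omega
        rw [e1, e3, if_neg (by omega)]
        ring
    · rw [dif_pos (show (i:ℕ) + 1 < n + 1 by omega), if_neg hin]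
      rcases lt_trichotomy (j:ℕ) (i:ℕ) with h | h | h
      · have e1 : (i:ℕ) ⊓ (j:ℕ) = (j:ℕ) := by omega
        have e2 : ((i:ℕ)+1) ⊓ (j:ℕ) = (j:ℕ) := by omega
        have e3 : ((i:ℕ)-1) ⊓ (j:ℕ) = (j:ℕ) := by omega
        rw [e1, e2, e3, if_neg (by omega)]
        ring
      · have e1 : (i:ℕ) ⊓ (j:ℕ) = m + 1 := by omega
        have e2 : ((i:ℕ)+1) ⊓ (j:ℕ) = m + 1 := by omega
        have e3 : ((i:ℕ)-1) ⊓ (j:ℕ) = m := by omega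
        rw [e1, e2, e3, if_pos (by omega)]
        push_cast
        ring
      · have e1 : (i:ℕ) ⊓ (j:ℕ) = m + 1 := by omega
        have e2 : ((i:ℕ)+1) ⊓ (j:ℕ) = m + 2 := by omega
        have e3 : ((i:ℕ)-1) ⊓ (j:ℕ) = m := by omega
        rw [e1, e2, e3, if_neg (by omega)]
        push_cast
        ring

/-- Lemma A.1: `Q` is invertible and `Q⁻¹` is entrywise nonnegative; in fact
`[Q⁻¹]_{ij} = k₀ + min(i,j) > 0`. -/
theorem stmt1 (n : ℕ) (hn : 1 ≤ n) (k₀ : ℝ) (hk : 0 < k₀) :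
    IsUnit (Qmat n k₀) ∧
    ∀ i j : Fin (n+1),
      0 ≤ (Qmat n k₀)⁻¹ i j ∧
      (Qmat n k₀)⁻¹ i j = k₀ + (min (i : ℕ) (j : ℕ) : ℝ) ∧
      0 < (Qmat n k₀)⁻¹ i j := by
  have h1 := mulQR n hn k₀ hk
  have h2 : Rmat n k₀ * Qmat n k₀ = 1 := mul_eq_one_comm.mp h1
  have hinv : (Qmat n k₀)⁻¹ = Rmat n k₀ := Matrix.inv_eq_right_inv h1
  refine ⟨⟨⟨Qmat n k₀, Rmat n k₀, h1, h2⟩, rfl⟩, fun i j => ?_⟩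
  rw [hinv]
  have hpos : 0 < Rmat n k₀ i j := by
    unfold Rmat
    positivity
  refine ⟨le_of_lt hpos, ?_, hpos⟩
  unfold Rmat
  push_cast
  rfl
end

section
/- Let z₁,…,zₙ be real numbers with z_t > 0 for every t, and let μ > 0. Define W = Diag(0, z₁, …, zₙ) + μQ. Then W is invertible and every entry of W⁻¹ is nonnegative: [W⁻¹]_{ij} ≥ 0 for all i, j ∈ {0,…,n}. -/
open Matrix

section Helpers

variable {m : ℕ}

lemma entry_nonneg_mul {A B : Matrix (Fin m) (Fin m) ℝ}
    (hA : ∀ i j, 0 ≤ A i j) (hB : ∀ i j, 0 ≤ B i j) (i j : Fin m) :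
    0 ≤ (A * B) i j := by
  rw [Matrix.mul_apply]
  exact Finset.sum_nonneg fun k _ => mul_nonneg (hA i k) (hB k j)

lemma entry_nonneg_pow {A : Matrix (Fin m) (Fin m) ℝ}
    (hA : ∀ i j, 0 ≤ A i j) : ∀ (k : ℕ) (i j : Fin m), 0 ≤ (A ^ k) i j := by
  intro k
  induction k with
  | zero =>
    intro i j
    rw [pow_zero, Matrix.one_apply]
    split_ifs <;> norm_num
  | succ k ih =>
    intro i j
    rw [pow_succ]
    exact entry_nonneg_mul ih hA i j

lemma shiftU_pow_eq_zero {E : Matrix (Fin m) (Fin m) ℝ}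
    (hE : ∀ i j : Fin m, (j : ℕ) ≠ (i : ℕ) + 1 → E i j = 0) :
    ∀ (k : ℕ) (i j : Fin m), (j : ℕ) < (i : ℕ) + k → (E ^ k) i j = 0 := by
  intro k
  induction k with
  | zero =>
    intro i j h
    have hne : i ≠ j := by rintro rfl; omega
    rw [pow_zero, Matrix.one_apply_ne hne]
  | succ k ih =>
    intro i j h
    rw [pow_succ, Matrix.mul_apply]
    refine Finset.sum_eq_zero fun x _ => ?_
    by_cases hx : (j : ℕ) = (x : ℕ) + 1
    · have : (x : ℕ) < (i : ℕ) + k := by omega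
      rw [ih i x this, zero_mul]
    · rw [hE x j hx, mul_zero]

lemma shiftL_pow_eq_zero {G : Matrix (Fin m) (Fin m) ℝ}
    (hG : ∀ i j : Fin m, (i : ℕ) ≠ (j : ℕ) + 1 → G i j = 0) :
    ∀ (k : ℕ) (i j : Fin m), (i : ℕ) < (j : ℕ) + k → (G ^ k) i j = 0 := by
  intro k
  induction k with
  | zero =>
    intro i j h
    have hne : i ≠ j := by rintro rfl; omega
    rw [pow_zero, Matrix.one_apply_ne hne]
  | succ k ih =>
    intro i j h
    rw [pow_succ', Matrix.mul_apply]
    refine Finset.sum_eq_zero fun x _ => ?_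
    by_cases hx : (i : ℕ) = (x : ℕ) + 1
    · have : (x : ℕ) < (j : ℕ) + k := by omega
      rw [ih x j this, mul_zero]
    · rw [hG i x hx, zero_mul]

lemma neumann_inv {A : Matrix (Fin m) (Fin m) ℝ} (h : A ^ m = 0) :
    (1 - A) * (∑ k ∈ Finset.range m, A ^ k) = 1 ∧
    (∑ k ∈ Finset.range m, A ^ k) * (1 - A) = 1 := by
  constructor
  · have h1 := mul_geom_sum A m
    rw [h] at h1
    have : (1 - A) * (∑ k ∈ Finset.range m, A ^ k)
        = -((A - 1) * ∑ k ∈ Finset.range m, A ^ k) := by noncomm_ring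
    rw [this, h1]
    simp
  · have h1 := geom_sum_mul A m
    rw [h] at h1
    have : (∑ k ∈ Finset.range m, A ^ k) * (1 - A)
        = -((∑ k ∈ Finset.range m, A ^ k) * (A - 1)) := by noncomm_ring
    rw [this, h1]
    simp

end Helpers

/-- The pivot sequence of the LU decomposition. -/
noncomputable def dseq (μ : ℝ) (a : ℕ → ℝ) : ℕ → ℝ
  | 0 => a 0
  | (i+1) => a (i+1) - μ ^ 2 / dseq μ a i

/-- Lemma A.2: `W = Diag(0, z₁, …, zₙ) + μQ` is invertible and `W⁻¹` is an
entrywise nonnegative matrix. -/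
theorem stmt7 (n : ℕ) (hn : 1 ≤ n) (k₀ : ℝ) (hk : 0 < k₀) (μ : ℝ) (hμ : 0 < μ)
    (z : Fin (n+1) → ℝ) (hz0 : z 0 = 0) (hz : ∀ t : Fin (n+1), t ≠ 0 → 0 < z t)
    (W : Matrix (Fin (n+1)) (Fin (n+1)) ℝ)
    (hW : W = Matrix.diagonal z + μ • Qmat n k₀) :
    IsUnit W ∧ ∀ i j, 0 ≤ W⁻¹ i j := by
  -- entry values of `W`
  have hWe : ∀ i j : Fin (n+1), W i j =
      (if i = j then z i else 0) + μ * Qmat n k₀ i j := by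
    intro i j
    rw [hW]
    simp [Matrix.add_apply, Matrix.diagonal_apply, Matrix.smul_apply]
  have hWdiag : ∀ i : Fin (n+1), W i i = z i +
      μ * (if (i : ℕ) = 0 then 1 + 1 / k₀ else if (i : ℕ) = n then 1 else 2) := by
    intro i
    rw [hWe]
    simp [Qmat]
  have hWoff : ∀ i j : Fin (n+1), i ≠ j →
      ((i : ℕ) + 1 = (j : ℕ) ∨ (j : ℕ) + 1 = (i : ℕ)) → W i j = -μ := by
    intro i j hne hor
    rw [hWe]
    simp [Qmat, hne, hor]
  have hWzero : ∀ i j : Fin (n+1), i ≠ j →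
      ¬((i : ℕ) + 1 = (j : ℕ) ∨ (j : ℕ) + 1 = (i : ℕ)) → W i j = 0 := by
    intro i j hne hor
    rw [hWe]
    simp [Qmat, hne, hor]
  -- the diagonal sequence and the pivots
  obtain ⟨a, hadef⟩ : ∃ a : ℕ → ℝ, ∀ i : ℕ, a i =
      W ⟨min i n, Nat.lt_succ_of_le (Nat.min_le_right i n)⟩
        ⟨min i n, Nat.lt_succ_of_le (Nat.min_le_right i n)⟩ :=
    ⟨_, fun _ => rfl⟩
  obtain ⟨d, hddef⟩ : ∃ d : ℕ → ℝ, d = dseq μ a := ⟨_, rfl⟩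
  have hd0 : d 0 = a 0 := by rw [hddef]; rfl
  have hdsucc : ∀ i : ℕ, d (i + 1) = a (i + 1) - μ ^ 2 / d i := by
    intro i; rw [hddef]; rfl
  have haW : ∀ i : Fin (n+1), a (i : ℕ) = W i i := by
    intro i
    rw [hadef]
    have h1 : (⟨min (i : ℕ) n, Nat.lt_succ_of_le (Nat.min_le_right _ n)⟩ : Fin (n+1)) = i := by
      apply Fin.ext
      have := i.isLt
      simp only [Fin.val_mk]
      omega
    rw [h1]
  -- positivity of the pivots
  have hdlt : ∀ i : ℕ, i < n → μ < d i := by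
    intro i
    induction i with
    | zero =>
      intro _
      have h0 : a 0 = μ * (1 + 1 / k₀) := by
        have h := haW 0
        simp only [Fin.val_zero] at h
        rw [h, hWdiag 0, hz0]
        simp
      rw [hd0, h0]
      have hpos : 0 < μ / k₀ := div_pos hμ hk
      rw [mul_add, mul_one, mul_one_div]
      linarith
    | succ i ih =>
      intro hi
      have hilt : i < n := by omega
      have hdi : μ < d i := ih hilt
      have hdipos : 0 < d i := lt_trans hμ hdi
      have hdiv : μ ^ 2 / d i < μ := by
        rw [div_lt_iff₀ hdipos]
        nlinarith
      set fi : Fin (n+1) := ⟨i + 1, by omega⟩ with hfi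
      have hz' : 0 < z fi := by
        apply hz
        intro h
        have := congrArg Fin.val h
        simp [hfi] at this
      have hafi : a (i + 1) = z fi + 2 * μ := by
        have h := haW fi
        have hv : (fi : ℕ) = i + 1 := rfl
        rw [hv] at h
        rw [h, hWdiag fi, hv]
        rw [if_neg (by omega), if_neg (by omega)]
        ring
      rw [hdsucc, hafi]
      linarith
  have hdpos : ∀ i : ℕ, i ≤ n → 0 < d i := by
    intro i hi
    rcases lt_or_eq_of_le hi with h | h
    · exact lt_trans hμ (hdlt i h)
    · obtain ⟨p, hp⟩ : ∃ p, i = p + 1 := ⟨i - 1, by omega⟩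
      have hdp : μ < d p := hdlt p (by omega)
      have hdppos : 0 < d p := lt_trans hμ hdp
      have hdiv : μ ^ 2 / d p < μ := by
        rw [div_lt_iff₀ hdppos]
        nlinarith
      set fi : Fin (n+1) := ⟨i, by omega⟩ with hfi
      have hz' : 0 < z fi := by
        apply hz
        intro hcon
        have := congrArg Fin.val hcon
        simp [hfi] at this
        omega
      have hafi : a i = z fi + μ := by
        have h2 := haW fi
        have hv : (fi : ℕ) = i := rfl
        rw [hv] at h2
        rw [h2, hWdiag fi, hv]
        rw [if_neg (by omega), if_pos h]
        ring
      rw [hp, hdsucc, ← hp, hafi]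
      linarith
  have hdF : ∀ i : Fin (n+1), 0 < d (i : ℕ) := fun i => hdpos _ (by omega)
  have hdFne : ∀ i : Fin (n+1), d (i : ℕ) ≠ 0 := fun i => ne_of_gt (hdF i)
  -- the bidiagonal factors
  obtain ⟨G, hGdef⟩ : ∃ G : Matrix (Fin (n+1)) (Fin (n+1)) ℝ, ∀ i j,
      G i j = if (i : ℕ) = (j : ℕ) + 1 then μ / d (i : ℕ) else 0 := ⟨_, fun _ _ => rfl⟩
  obtain ⟨E, hEdef⟩ : ∃ E : Matrix (Fin (n+1)) (Fin (n+1)) ℝ, ∀ i j,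
      E i j = if (j : ℕ) = (i : ℕ) + 1 then μ / d (i : ℕ) else 0 := ⟨_, fun _ _ => rfl⟩
  have hGE : ∀ i j : Fin (n+1), (G * E) i j =
      if (i : ℕ) = (j : ℕ) ∧ 0 < (i : ℕ) then
        (μ / d (i : ℕ)) * (μ / d ((i : ℕ) - 1)) else 0 := by
    intro i j
    rw [Matrix.mul_apply]
    by_cases h : (i : ℕ) = (j : ℕ) ∧ 0 < (i : ℕ)
    · rw [if_pos h]
      obtain ⟨hij, hi0⟩ := h
      set x : Fin (n+1) := ⟨(i : ℕ) - 1, by omega⟩ with hx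
      have hxv : (x : ℕ) = (i : ℕ) - 1 := rfl
      rw [Finset.sum_eq_single x]
      · rw [hGdef, hEdef, hxv, if_pos (by omega), if_pos (by omega)]
      · intro b _ hb
        by_cases hcb : (i : ℕ) = (b : ℕ) + 1
        · exact absurd (Fin.ext (by omega : (b : ℕ) = (x : ℕ))) hb
        · rw [hGdef, if_neg hcb, zero_mul]
      · intro hmem
        exact absurd (Finset.mem_univ x) hmem
    · rw [if_neg h]
      refine Finset.sum_eq_zero fun x _ => ?_
      by_cases h1 : (i : ℕ) = (x : ℕ) + 1
      · by_cases h2 : (j : ℕ) = (x : ℕ) + 1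
        · exact absurd ⟨by omega, by omega⟩ h
        · rw [hEdef, if_neg h2, mul_zero]
      · rw [hGdef, if_neg h1, zero_mul]
  set D : Matrix (Fin (n+1)) (Fin (n+1)) ℝ :=
    Matrix.diagonal (fun i : Fin (n+1) => d (i : ℕ)) with hD
  have hfact : W = D * ((1 - G) * (1 - E)) := by
    have hexp : (1 - G) * (1 - E) = 1 - E - G + G * E := by noncomm_ring
    rw [hexp]
    ext i j
    rw [hD, Matrix.diagonal_mul, Matrix.add_apply, hGE i j, Matrix.sub_apply,
      Matrix.sub_apply, hEdef i j, hGdef i j]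
    by_cases hAB : (i : ℕ) = (j : ℕ)
    · have hij : i = j := Fin.ext hAB
      subst hij
      rw [Matrix.one_apply_eq, if_neg (show ¬(i : ℕ) = (i : ℕ) + 1 from by omega)]
      by_cases hi0 : (i : ℕ) = 0
      · rw [if_neg (show ¬((i : ℕ) = (i : ℕ) ∧ 0 < (i : ℕ)) from by rintro ⟨-, h2⟩; omega)]
        have hiF : i = 0 := Fin.ext (by simpa using hi0)
        subst hiF
        have h0 : a 0 = μ * (1 + 1 / k₀) := by
          have h := haW 0
          simp only [Fin.val_zero] at h
          rw [h, hWdiag 0, hz0]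
          simp
        rw [hWdiag 0, hz0]
        simp only [Fin.val_zero, if_true, eq_self_iff_true]
        rw [hd0, h0]
        ring
      · rw [if_pos ⟨rfl, by omega⟩]
        have hrec : d (i : ℕ) = a (i : ℕ) - μ ^ 2 / d ((i : ℕ) - 1) := by
          obtain ⟨p, hp⟩ : ∃ p, (i : ℕ) = p + 1 := ⟨(i : ℕ) - 1, by omega⟩
          rw [hp, hdsucc]
          norm_num [hp]
        have key : d (i : ℕ) + μ ^ 2 / d ((i : ℕ) - 1) = a (i : ℕ) := by
          rw [hrec]; ring
        rw [← haW i, ← key]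
        have h1 := hdFne i
        have h2 : d ((i : ℕ) - 1) ≠ 0 := ne_of_gt (hdpos _ (by omega))
        field_simp
        ring
    · have hne : i ≠ j := fun h => hAB (congrArg Fin.val h)
      rw [Matrix.one_apply_ne hne,
        if_neg (show ¬((i : ℕ) = (j : ℕ) ∧ 0 < (i : ℕ)) from by rintro ⟨h1, -⟩; exact hAB h1)]
      by_cases hB : (j : ℕ) = (i : ℕ) + 1
      · rw [if_pos hB, if_neg (show ¬(i : ℕ) = (j : ℕ) + 1 from by omega)]
        rw [hWoff i j hne (Or.inl hB.symm)]
        have h1 := hdFne i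
        field_simp
        ring
      · by_cases hC : (i : ℕ) = (j : ℕ) + 1
        · rw [if_pos hC, if_neg hB]
          rw [hWoff i j hne (Or.inr hC.symm)]
          have h1 := hdFne i
          field_simp
          ring
        · rw [if_neg hC, if_neg hB]
          rw [hWzero i j hne (by omega)]
          ring
  -- Neumann series inverses of the bidiagonal factors
  have hEnil : E ^ (n+1) = 0 := by
    ext i j
    rw [Matrix.zero_apply]
    refine shiftU_pow_eq_zero (fun i j h => by rw [hEdef, if_neg h]) (n+1) i j ?_
    have := j.isLt
    omega
  have hGnil : G ^ (n+1) = 0 := by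
    ext i j
    rw [Matrix.zero_apply]
    refine shiftL_pow_eq_zero (fun i j h => by rw [hGdef, if_neg h]) (n+1) i j ?_
    have := i.isLt
    omega
  obtain ⟨hE1, hE2⟩ := neumann_inv hEnil
  obtain ⟨hG1, hG2⟩ := neumann_inv hGnil
  set SE : Matrix (Fin (n+1)) (Fin (n+1)) ℝ := ∑ k ∈ Finset.range (n+1), E ^ k with hSE
  set SG : Matrix (Fin (n+1)) (Fin (n+1)) ℝ := ∑ k ∈ Finset.range (n+1), G ^ k with hSG
  set Dinv : Matrix (Fin (n+1)) (Fin (n+1)) ℝ :=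
    Matrix.diagonal (fun i : Fin (n+1) => (d (i : ℕ))⁻¹) with hDinv
  have hDDinv : D * Dinv = 1 := by
    rw [hD, hDinv, Matrix.diagonal_mul_diagonal]
    have : (fun i : Fin (n+1) => d (i : ℕ) * (d (i : ℕ))⁻¹) = fun _ => (1 : ℝ) :=
      funext fun i => mul_inv_cancel₀ (hdFne i)
    rw [this, Matrix.diagonal_one]
  set M : Matrix (Fin (n+1)) (Fin (n+1)) ℝ := SE * (SG * Dinv) with hM
  have hWM : W * M = 1 := by
    rw [hfact, hM]
    calc D * ((1 - G) * (1 - E)) * (SE * (SG * Dinv))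
        = D * ((1 - G) * (((1 - E) * SE) * SG) * Dinv) := by
          simp only [Matrix.mul_assoc]
      _ = D * Dinv := by rw [hE1, Matrix.one_mul, hG1, Matrix.one_mul]
      _ = 1 := hDDinv
  have hinv : Invertible W := invertibleOfRightInverse W M hWM
  have hWinv : W⁻¹ = M := Matrix.inv_eq_right_inv hWM
  refine ⟨isUnit_of_invertible W, ?_⟩
  intro i j
  rw [hWinv, hM]
  have hEpos : ∀ i j : Fin (n+1), 0 ≤ E i j := by
    intro i j
    rw [hEdef]
    split_ifs
    · exact div_nonneg (le_of_lt hμ) (le_of_lt (hdF i))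
    · exact le_refl 0
  have hGpos : ∀ i j : Fin (n+1), 0 ≤ G i j := by
    intro i j
    rw [hGdef]
    split_ifs
    · exact div_nonneg (le_of_lt hμ) (le_of_lt (hdF i))
    · exact le_refl 0
  have hSEpos : ∀ i j : Fin (n+1), 0 ≤ SE i j := by
    intro i j
    rw [hSE, Matrix.sum_apply]
    exact Finset.sum_nonneg fun k _ => entry_nonneg_pow hEpos k i j
  have hSGpos : ∀ i j : Fin (n+1), 0 ≤ SG i j := by
    intro i j
    rw [hSG, Matrix.sum_apply]
    exact Finset.sum_nonneg fun k _ => entry_nonneg_pow hGpos k i j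
  have hDinvpos : ∀ i j : Fin (n+1), 0 ≤ Dinv i j := by
    intro i j
    rw [hDinv, Matrix.diagonal_apply]
    split_ifs
    · exact inv_nonneg.mpr (le_of_lt (hdF i))
    · exact le_refl 0
  exact entry_nonneg_mul hSEpos (entry_nonneg_mul hSGpos hDinvpos) i j
end

section
/- Fix integers n, k ≥ 1, vectors w₁,…,wₙ ∈ ℝᵏ, and real numbers ω₁,…,ωₙ. Define ψ : ℝᵏ → ℝ by ψ(f) = Σ_{t=1}^{n} [ (ω_t − ⟨w_t, f⟩)·expit(⟨w_t, f⟩) + log(1 + exp(⟨w_t, f⟩)) ]. Then ψ is differentiable on ℝᵏ and its gradient is ∇ψ(f) = Σ_{t=1}^{n} (ω_t − ⟨w_t, f⟩) · ( expit(⟨w_t, f⟩) / (1 + exp(⟨w_t, f⟩)) ) · w_t. -/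
open Matrix

/-- The inverse logit function `expit(u) = 1/(1 + exp(−u))`. -/
noncomputable def expit (u : ℝ) : ℝ := 1 / (1 + Real.exp (-u))

/-- The KL objective of Proposition 5:
`ψ(f) = Σ_t [(ω_t − ⟨w_t,f⟩) expit(⟨w_t,f⟩) + log(1 + exp(⟨w_t,f⟩))]`. -/
noncomputable def psiFun (n k : ℕ) (w : Fin n → Fin k → ℝ) (ω : Fin n → ℝ)
    (f : Fin k → ℝ) : ℝ :=
  ∑ t, ((ω t - w t ⬝ᵥ f) * expit (w t ⬝ᵥ f) + Real.log (1 + Real.exp (w t ⬝ᵥ f)))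

lemma expit_hasDerivAt (u : ℝ) :
    HasDerivAt expit (expit u / (1 + Real.exp u)) u := by
  have hne : (1 + Real.exp (-u)) ≠ 0 := by positivity
  have h1 : HasDerivAt (fun x : ℝ => 1 + Real.exp (-x)) (-Real.exp (-u)) u := by
    have := (Real.hasDerivAt_exp (-u)).comp u (hasDerivAt_neg u)
    simpa using this.const_add 1
  have h2 := h1.inv hne
  have heq : -(-Real.exp (-u)) / (1 + Real.exp (-u)) ^ 2
      = expit u / (1 + Real.exp u) := by
    have hpos : (0:ℝ) < 1 + Real.exp u := by positivity
    rw [expit, Real.exp_neg]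
    have he : Real.exp u ≠ 0 := Real.exp_ne_zero u
    field_simp
    ring
  have : HasDerivAt (fun x : ℝ => (1 + Real.exp (-x))⁻¹)
      (expit u / (1 + Real.exp u)) u := heq ▸ h2
  have hfun : expit = fun x : ℝ => (1 + Real.exp (-x))⁻¹ := by
    funext x; simp [expit, one_div]
  rw [hfun]
  convert this using 2
  simp [expit, one_div]

lemma scalar_hasDerivAt (a u : ℝ) :
    HasDerivAt (fun x : ℝ => (a - x) * expit x + Real.log (1 + Real.exp x))
      ((a - u) * (expit u / (1 + Real.exp u))) u := by
  have hpos : (0:ℝ) < 1 + Real.exp u := by positivity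
  have h1 : HasDerivAt (fun x : ℝ => (a - x) * expit x)
      ((-1) * expit u + (a - u) * (expit u / (1 + Real.exp u))) u :=
    ((hasDerivAt_const u a).sub (hasDerivAt_id u)).mul (expit_hasDerivAt u) |>.congr_deriv
      (by simp only [Pi.sub_apply, id_eq]; ring)
  have h2 : HasDerivAt (fun x : ℝ => Real.log (1 + Real.exp x))
      (Real.exp u / (1 + Real.exp u)) u := by
    have := ((Real.hasDerivAt_exp u).const_add 1).log (ne_of_gt hpos)
    simpa using this
  have hsum := h1.add h2
  have hexp : Real.exp u / (1 + Real.exp u) = expit u := by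
    rw [expit, Real.exp_neg]
    have he : Real.exp u ≠ 0 := Real.exp_ne_zero u
    field_simp
    ring
  have : (-1) * expit u + (a - u) * (expit u / (1 + Real.exp u))
      + Real.exp u / (1 + Real.exp u) = (a - u) * (expit u / (1 + Real.exp u)) := by
    rw [hexp]; ring
  exact this ▸ hsum

noncomputable def dotCLM {k : ℕ} (v : Fin k → ℝ) : (Fin k → ℝ) →L[ℝ] ℝ :=
  ∑ i, v i • (ContinuousLinearMap.proj i : (Fin k → ℝ) →L[ℝ] ℝ)

lemma dotCLM_apply {k : ℕ} (v f : Fin k → ℝ) : dotCLM v f = v ⬝ᵥ f := by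
  simp [dotCLM, dotProduct]

/-- Gradient formula of Proposition 5: `ψ` is differentiable with
`∇ψ(f) = Σ_t (ω_t − ⟨w_t,f⟩) (expit(⟨w_t,f⟩)/(1 + exp(⟨w_t,f⟩))) w_t`. -/
theorem stmt13 (n k : ℕ) (hn : 1 ≤ n) (hk : 1 ≤ k)
    (w : Fin n → Fin k → ℝ) (ω : Fin n → ℝ) :
    ∀ f : Fin k → ℝ,
      DifferentiableAt ℝ (psiFun n k w ω) f ∧
      ∀ j : Fin k,
        fderiv ℝ (psiFun n k w ω) f (Pi.single j 1)
          = ∑ t, (ω t - w t ⬝ᵥ f) * (expit (w t ⬝ᵥ f) / (1 + Real.exp (w t ⬝ᵥ f))) * w t j := by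
  intro f
  set c : Fin n → ℝ := fun t =>
    (ω t - w t ⬝ᵥ f) * (expit (w t ⬝ᵥ f) / (1 + Real.exp (w t ⬝ᵥ f))) with hc
  have hterm : ∀ t : Fin n, HasFDerivAt
      (fun g : Fin k → ℝ => (ω t - w t ⬝ᵥ g) * expit (w t ⬝ᵥ g)
        + Real.log (1 + Real.exp (w t ⬝ᵥ g)))
      (c t • dotCLM (w t)) f := by
    intro t
    have hlin : HasFDerivAt (fun g : Fin k → ℝ => w t ⬝ᵥ g) (dotCLM (w t)) f := by
      have := (dotCLM (w t)).hasFDerivAt (x := f)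
      refine this.congr_of_eventuallyEq ?_
      filter_upwards with g using (dotCLM_apply (w t) g).symm
    exact (scalar_hasDerivAt (ω t) (w t ⬝ᵥ f)).comp_hasFDerivAt f hlin
  have hψ : HasFDerivAt (psiFun n k w ω) (∑ t, c t • dotCLM (w t)) f := by
    have := HasFDerivAt.fun_sum (fun t (_ : t ∈ Finset.univ) => hterm t)
    exact this
  refine ⟨hψ.differentiableAt, fun j => ?_⟩
  rw [hψ.fderiv]
  simp only [ContinuousLinearMap.coe_sum', Finset.sum_apply,
    ContinuousLinearMap.coe_smul', Pi.smul_apply, smul_eq_mul]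
  refine Finset.sum_congr rfl fun t _ => ?_
  rw [dotCLM_apply]
  congr 1
  simp [dotProduct, Pi.single_apply, mul_ite]
end
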